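/- Let u₀ : ℝ → ℂ be a Schwartz function and let ζ ∈ ℂ with Im ζ ≥ 0. Then there exists a unique pair of bounded continuous functions v₁, v₂ : [0,∞) → ℂ satisfying, for all x ≥ 0, v₁(x) = −∫ₓ^∞ e^{−2iζ(x−ξ)} u₀(ξ) v₂(ξ) dξ and v₂(x) = 1 + ∫ₓ^∞ conj(u₀(ξ)) v₁(ξ) dξ, where all integrals converge absolutely. Moreover this solution satisfies v₁(x) → 0 and v₂(x) → 1 as x → ∞. -/

import Mathlib

open MeasureTheory

/-- The pair `(v₁, v₂)` is a bounded continuous solution on `[0,∞)` of the Volterra system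
`v₁(x) = −∫ₓ^∞ e^{−2iζ(x−ξ)} u₀(ξ) v₂(ξ) dξ`,
`v₂(x) = 1 + ∫ₓ^∞ conj(u₀(ξ)) v₁(ξ) dξ`, with all integrals converging absolutely. -/
def IsVolterraSol (u₀ : SchwartzMap ℝ ℂ) (ζ : ℂ) (v : (ℝ → ℂ) × (ℝ → ℂ)) : Prop :=
  ContinuousOn v.1 (Set.Ici 0) ∧ ContinuousOn v.2 (Set.Ici 0) ∧
  (∃ C : ℝ, ∀ x ≥ (0 : ℝ), ‖v.1 x‖ ≤ C ∧ ‖v.2 x‖ ≤ C) ∧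
  ∀ x ≥ (0 : ℝ),
    IntegrableOn
      (fun ξ : ℝ => Complex.exp (-(2 * Complex.I * ζ * ((x - ξ : ℝ) : ℂ))) * u₀ ξ * v.2 ξ)
      (Set.Ioi x) ∧
    IntegrableOn (fun ξ : ℝ => (starRingEnd ℂ) (u₀ ξ) * v.1 ξ) (Set.Ioi x) ∧
    v.1 x =
      -∫ ξ in Set.Ioi x, Complex.exp (-(2 * Complex.I * ζ * ((x - ξ : ℝ) : ℂ))) * u₀ ξ * v.2 ξ ∧
    v.2 x = 1 + ∫ ξ in Set.Ioi x, (starRingEnd ℂ) (u₀ ξ) * v.1 ξ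

open MeasureTheory Set Filter Topology NNReal

namespace Stmt15

variable (u₀ : SchwartzMap ℝ ℂ)

noncomputable def F (x : ℝ) : ℝ := ∫ ξ in Ioi x, ‖u₀ ξ‖

lemma hInt : Integrable (fun ξ : ℝ => ‖u₀ ξ‖) := u₀.integrable.norm

lemma F_nonneg (x : ℝ) : 0 ≤ F u₀ x :=
  setIntegral_nonneg measurableSet_Ioi (fun _ _ => norm_nonneg _)

lemma F_le (x : ℝ) : F u₀ x ≤ ∫ ξ : ℝ, ‖u₀ ξ‖ :=
  setIntegral_le_integral (hInt u₀) (Filter.Eventually.of_forall fun _ => norm_nonneg _)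

/-- splitting of an improper integral -/
lemma integral_Ioi_split {g : ℝ → ℂ} {a b : ℝ} (hg : IntegrableOn g (Ioi a)) (hab : a ≤ b) :
    ∫ ξ in Ioi a, g ξ = (∫ ξ in a..b, g ξ) + ∫ ξ in Ioi b, g ξ := by
  rw [intervalIntegral.integral_of_le hab, ← setIntegral_union]
  · rw [Ioc_union_Ioi_eq_Ioi hab]
  · exact Ioc_disjoint_Ioi le_rfl
  · exact measurableSet_Ioi
  · exact hg.mono_set (Ioc_subset_Ioi_self.trans (Ioi_subset_Ioi le_rfl))
  · exact hg.mono_set (Ioi_subset_Ioi hab)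

lemma integral_Ioi_split' {g : ℝ → ℝ} {a b : ℝ} (hg : IntegrableOn g (Ioi a)) (hab : a ≤ b) :
    ∫ ξ in Ioi a, g ξ = (∫ ξ in a..b, g ξ) + ∫ ξ in Ioi b, g ξ := by
  rw [intervalIntegral.integral_of_le hab, ← setIntegral_union]
  · rw [Ioc_union_Ioi_eq_Ioi hab]
  · exact Ioc_disjoint_Ioi le_rfl
  · exact measurableSet_Ioi
  · exact hg.mono_set (Ioc_subset_Ioi_self.trans (Ioi_subset_Ioi le_rfl))
  · exact hg.mono_set (Ioi_subset_Ioi hab)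

lemma F_eq (x : ℝ) : F u₀ x = F u₀ 0 - ∫ t in (0:ℝ)..x, ‖u₀ t‖ := by
  rcases le_total 0 x with h | h
  · rw [F, F, integral_Ioi_split' ((hInt u₀).integrableOn) h]; ring
  · rw [F, F, integral_Ioi_split' ((hInt u₀).integrableOn) h,
      intervalIntegral.integral_symm]; ring

lemma F_hasDerivAt (x : ℝ) : HasDerivAt (F u₀) (-‖u₀ x‖) x := by
  have h : HasDerivAt (fun y => ∫ t in (0:ℝ)..y, ‖u₀ t‖) (‖u₀ x‖) x := by
    refine intervalIntegral.integral_hasDerivAt_right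
      ((hInt u₀).intervalIntegrable) ?_ ?_
    · exact (u₀.continuous.norm.stronglyMeasurable).stronglyMeasurableAtFilter
    · exact u₀.continuous.norm.continuousAt
  have h2 := (h.const_sub (F u₀ 0)).congr_of_eventuallyEq
    (Filter.Eventually.of_forall fun y => (F_eq u₀ y))
  simpa using h2

lemma F_continuous : Continuous (F u₀) :=
  continuous_iff_continuousAt.2 fun x => (F_hasDerivAt u₀ x).continuousAt

lemma F_antitone : Antitone (F u₀) := by
  intro a b hab
  rw [F, F, integral_Ioi_split' ((hInt u₀).integrableOn) hab]
  have : 0 ≤ ∫ ξ in a..b, ‖u₀ ξ‖ :=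
    intervalIntegral.integral_nonneg hab fun _ _ => norm_nonneg _
  linarith

lemma F_tendsto : Tendsto (F u₀) atTop (𝓝 0) := by
  have h := intervalIntegral_tendsto_integral_Ioi 0 ((hInt u₀).integrableOn)
    (tendsto_id (α := ℝ))
  have h2 : Tendsto (fun x => F u₀ 0 - ∫ t in (0:ℝ)..x, ‖u₀ t‖) atTop (𝓝 (F u₀ 0 - F u₀ 0)) :=
    tendsto_const_nhds.sub h
  rw [sub_self] at h2
  exact h2.congr fun x => (F_eq u₀ x).symm


lemma expF_integrand_integrable (x : ℝ) :
    IntegrableOn (fun ξ : ℝ => ‖u₀ ξ‖ * Real.exp (2 * F u₀ ξ)) (Ioi x) := by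
  refine (Integrable.mono' ((hInt u₀).const_mul (Real.exp (2 * ∫ ξ : ℝ, ‖u₀ ξ‖)))
    ?_ ?_).integrableOn
  · exact (u₀.continuous.norm.mul
      (continuous_const.mul (F_continuous u₀)).rexp).aestronglyMeasurable
  · refine Filter.Eventually.of_forall fun ξ => ?_
    rw [Real.norm_eq_abs, abs_of_nonneg (by positivity)]
    rw [mul_comm ‖u₀ ξ‖ _]
    refine mul_le_mul_of_nonneg_right
      (Real.exp_le_exp.2 (by have := F_le u₀ ξ; linarith)) (norm_nonneg _)

/-- The key FTC identity: `∫ₓ^∞ ‖u₀‖ e^{2F} = (e^{2F(x)} - 1)/2`. -/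
lemma key_int (x : ℝ) :
    ∫ ξ in Ioi x, ‖u₀ ξ‖ * Real.exp (2 * F u₀ ξ) = (Real.exp (2 * F u₀ x) - 1) / 2 := by
  have hderiv : ∀ t ∈ Ici x, HasDerivAt (fun t => -Real.exp (2 * F u₀ t) / 2)
      (‖u₀ t‖ * Real.exp (2 * F u₀ t)) t := by
    intro t _
    have h1 : HasDerivAt (fun t => 2 * F u₀ t) (2 * -‖u₀ t‖) t :=
      (F_hasDerivAt u₀ t).const_mul 2
    have h2 : HasDerivAt (fun t => -Real.exp (2 * F u₀ t) / 2)
        (-(Real.exp (2 * F u₀ t) * (2 * -‖u₀ t‖)) / 2) t := (h1.exp).neg.div_const 2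
    convert h2 using 1
    ring
  have htend : Tendsto (fun t => -Real.exp (2 * F u₀ t) / 2) atTop (𝓝 (-(1:ℝ)/2)) := by
    have := ((F_tendsto u₀).const_mul 2)
    rw [mul_zero] at this
    have := (Real.continuous_exp.tendsto 0).comp this
    rw [Real.exp_zero] at this
    exact (this.neg).div_const 2
  have := integral_Ioi_of_hasDerivAt_of_tendsto' hderiv (expF_integrand_integrable u₀ x) htend
  rw [this]
  ring


lemma continuous_integral_Ioi {g : ℝ → ℂ} (hg : ∀ a : ℝ, IntegrableOn g (Ioi a)) :
    Continuous (fun x => ∫ ξ in Ioi x, g ξ) := by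
  refine continuous_iff_continuousAt.2 fun x₀ => ?_
  have hii : ∀ a b : ℝ, IntervalIntegrable g volume a b := fun a b => by
    rw [intervalIntegrable_iff]
    exact (hg (min a b - 1)).mono_set
      (Ioc_subset_Ioi_self.trans (Ioi_subset_Ioi (by linarith)))
  have hcont : ContinuousAt
      (fun x => (∫ ξ in Ioi (x₀ - 1), g ξ) - ∫ t in (x₀ - 1)..x, g t) x₀ :=
    (continuous_const.sub (intervalIntegral.continuous_primitive hii (x₀ - 1))).continuousAt
  refine hcont.congr ?_
  refine Filter.eventuallyEq_of_mem (Ioi_mem_nhds (by linarith : x₀ - 1 < x₀)) fun x hx => ?_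
  rw [integral_Ioi_split (hg (x₀ - 1)) (le_of_lt hx)]
  ring

noncomputable def Ker (ζ : ℂ) (x ξ : ℝ) : ℂ :=
  Complex.exp (-(2 * Complex.I * ζ * ((x - ξ : ℝ) : ℂ)))

lemma Ker_eq (ζ : ℂ) (x ξ : ℝ) :
    Ker ζ x ξ = Complex.exp (-(2 * Complex.I * ζ) * x) *
      Complex.exp ((2 * Complex.I * ζ) * ξ) := by
  rw [Ker, ← Complex.exp_add]
  congr 1
  push_cast
  ring

lemma Ker_norm_le {ζ : ℂ} (hζ : 0 ≤ ζ.im) {x ξ : ℝ} (h : x ≤ ξ) : ‖Ker ζ x ξ‖ ≤ 1 := by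
  rw [Ker, Complex.norm_exp, Real.exp_le_one_iff]
  have hre : (-(2 * Complex.I * ζ * ((x - ξ : ℝ) : ℂ))).re = 2 * ζ.im * (x - ξ) := by
    simp [Complex.mul_re, Complex.mul_im]
  rw [hre]
  nlinarith

lemma B_norm {ζ : ℂ} (ξ : ℝ) :
    ‖Complex.exp ((2 * Complex.I * ζ) * ξ)‖ = Real.exp (-(2 * ζ.im) * ξ) := by
  rw [Complex.norm_exp]
  congr 1
  simp [Complex.mul_re, Complex.mul_im]


/-- Generic estimate: dominated by `c * ‖u₀‖`. -/
lemma est0 {f : ℝ → ℂ} {x c : ℝ} (hc : 0 ≤ c) (hf : IntegrableOn f (Ioi x))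
    (hb : ∀ ξ ∈ Ioi x, ‖f ξ‖ ≤ c * ‖u₀ ξ‖) :
    ‖∫ ξ in Ioi x, f ξ‖ ≤ c * F u₀ x := by
  calc ‖∫ ξ in Ioi x, f ξ‖ ≤ ∫ ξ in Ioi x, ‖f ξ‖ := norm_integral_le_integral_norm f
    _ ≤ ∫ ξ in Ioi x, c * ‖u₀ ξ‖ :=
      setIntegral_mono_on hf.norm (((hInt u₀).const_mul c).integrableOn)
        measurableSet_Ioi hb
    _ = c * F u₀ x := by rw [F, integral_const_mul]

/-- Generic estimate: dominated by `c * ‖u₀‖ e^{2F}`. -/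
lemma est {f : ℝ → ℂ} {x c : ℝ} (hc : 0 ≤ c) (hf : IntegrableOn f (Ioi x))
    (hb : ∀ ξ ∈ Ioi x, ‖f ξ‖ ≤ c * (‖u₀ ξ‖ * Real.exp (2 * F u₀ ξ))) :
    ‖∫ ξ in Ioi x, f ξ‖ ≤ c * ((Real.exp (2 * F u₀ x) - 1) / 2) := by
  calc ‖∫ ξ in Ioi x, f ξ‖ ≤ ∫ ξ in Ioi x, ‖f ξ‖ := norm_integral_le_integral_norm f
    _ ≤ ∫ ξ in Ioi x, c * (‖u₀ ξ‖ * Real.exp (2 * F u₀ ξ)) :=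
      setIntegral_mono_on hf.norm ((expF_integrand_integrable u₀ x).const_mul c)
        measurableSet_Ioi hb
    _ = c * ((Real.exp (2 * F u₀ x) - 1) / 2) := by rw [integral_const_mul, key_int]

/-- Integrability of the first-component integrand. -/
lemma int1 {ζ : ℂ} (hζ : 0 ≤ ζ.im) {φ : ℝ → ℂ} {C : ℝ}
    (hφc : Continuous φ) (hφb : ∀ ξ, ‖φ ξ‖ ≤ C) (x : ℝ) :
    IntegrableOn (fun ξ : ℝ => Ker ζ x ξ * u₀ ξ * φ ξ) (Ioi x) := by
  refine Integrable.mono' (((hInt u₀).const_mul C).integrableOn) ?_ ?_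
  · exact (((Complex.continuous_exp.comp (by continuity)).mul u₀.continuous).mul
      hφc).aestronglyMeasurable.restrict
  · refine (ae_restrict_iff' measurableSet_Ioi).2 (Filter.Eventually.of_forall fun ξ hξ => ?_)
    rw [norm_mul, norm_mul]
    have hk := Ker_norm_le hζ (le_of_lt hξ)
    have hb := hφb ξ
    calc ‖Ker ζ x ξ‖ * ‖u₀ ξ‖ * ‖φ ξ‖ ≤ 1 * ‖u₀ ξ‖ * C :=
          mul_le_mul (mul_le_mul hk le_rfl (norm_nonneg _) zero_le_one) hb
            (norm_nonneg _) (by positivity)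
      _ = C * ‖u₀ ξ‖ := by ring

/-- Integrability of the inner (x-free) first-component integrand on tails. -/
lemma int1' {ζ : ℂ} (hζ : 0 ≤ ζ.im) {φ : ℝ → ℂ} {C : ℝ}
    (hφc : Continuous φ) (hφb : ∀ ξ, ‖φ ξ‖ ≤ C) (a : ℝ) :
    IntegrableOn (fun ξ : ℝ => Complex.exp ((2 * Complex.I * ζ) * ξ) * u₀ ξ * φ ξ)
      (Ioi a) := by
  refine Integrable.mono'
    (((hInt u₀).const_mul (Real.exp (-(2 * ζ.im) * a) * C)).integrableOn) ?_ ?_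
  · exact (((Complex.continuous_exp.comp (by continuity)).mul u₀.continuous).mul
      hφc).aestronglyMeasurable.restrict
  · refine (ae_restrict_iff' measurableSet_Ioi).2 (Filter.Eventually.of_forall fun ξ hξ => ?_)
    have hC : 0 ≤ C := (norm_nonneg _).trans (hφb ξ)
    have h2 : ‖Complex.exp ((2 * Complex.I * ζ) * ξ)‖ ≤ Real.exp (-(2 * ζ.im) * a) := by
      rw [B_norm]
      refine Real.exp_le_exp.2 ?_
      have : a ≤ ξ := le_of_lt hξ
      nlinarith
    rw [norm_mul, norm_mul]
    have hb := hφb ξ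
    calc ‖Complex.exp ((2 * Complex.I * ζ) * (ξ:ℂ))‖ * ‖u₀ ξ‖ * ‖φ ξ‖
        ≤ Real.exp (-(2 * ζ.im) * a) * ‖u₀ ξ‖ * C :=
          mul_le_mul (mul_le_mul h2 le_rfl (norm_nonneg _) (Real.exp_pos _).le) hb
            (norm_nonneg _) (by positivity)
      _ = Real.exp (-(2 * ζ.im) * a) * C * ‖u₀ ξ‖ := by ring

/-- Integrability of the second-component integrand. -/
lemma int2 {φ : ℝ → ℂ} {C : ℝ} (hφc : Continuous φ) (hφb : ∀ ξ, ‖φ ξ‖ ≤ C) (a : ℝ) :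
    IntegrableOn (fun ξ : ℝ => (starRingEnd ℂ) (u₀ ξ) * φ ξ) (Ioi a) := by
  refine Integrable.mono' (((hInt u₀).const_mul C)) ?_ ?_ |>.integrableOn
  · exact ((Complex.continuous_conj.comp u₀.continuous).mul hφc).aestronglyMeasurable
  · refine Filter.Eventually.of_forall fun ξ => ?_
    have hC : 0 ≤ C := (norm_nonneg _).trans (hφb ξ)
    rw [norm_mul, RCLike.norm_conj]
    have hb := hφb ξ
    calc ‖u₀ ξ‖ * ‖φ ξ‖ ≤ ‖u₀ ξ‖ * C :=
          mul_le_mul_of_nonneg_left hb (norm_nonneg _)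
      _ = C * ‖u₀ ξ‖ := by ring


noncomputable def wt (x : ℝ) : ℝ := Real.exp (2 * F u₀ x)

lemma wt_pos (x : ℝ) : 0 < wt u₀ x := Real.exp_pos _
lemma one_le_wt (x : ℝ) : 1 ≤ wt u₀ x := by
  rw [wt, ← Real.exp_zero]
  exact Real.exp_le_exp.2 (by have := F_nonneg u₀ x; linarith)
lemma wt_le (x : ℝ) : wt u₀ x ≤ Real.exp (2 * ∫ ξ : ℝ, ‖u₀ ξ‖) :=
  Real.exp_le_exp.2 (by have := F_le u₀ x; linarith)
lemma wt_continuous : Continuous (wt u₀) :=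
  (continuous_const.mul (F_continuous u₀)).rexp

lemma est_T1 {ζ : ℂ} (hζ : 0 ≤ ζ.im) {φ : ℝ → ℂ} {c : ℝ} (hc : 0 ≤ c)
    (hφ : IntegrableOn (fun ξ : ℝ => Ker ζ x ξ * u₀ ξ * φ ξ) (Ioi x))
    (hφb : ∀ ξ ∈ Ioi x, ‖φ ξ‖ ≤ c * wt u₀ ξ) :
    ‖∫ ξ in Ioi x, Ker ζ x ξ * u₀ ξ * φ ξ‖ ≤ c * ((wt u₀ x - 1) / 2) := by
  rw [wt]
  refine est u₀ hc hφ fun ξ hξ => ?_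
  rw [norm_mul, norm_mul]
  have hk := Ker_norm_le hζ (le_of_lt hξ)
  have hb := hφb ξ hξ
  calc ‖Ker ζ x ξ‖ * ‖u₀ ξ‖ * ‖φ ξ‖ ≤ 1 * ‖u₀ ξ‖ * (c * wt u₀ ξ) :=
        mul_le_mul (mul_le_mul hk le_rfl (norm_nonneg _) zero_le_one) hb
          (norm_nonneg _) (by positivity)
    _ = c * (‖u₀ ξ‖ * Real.exp (2 * F u₀ ξ)) := by rw [wt]; ring

lemma est_T2 {φ : ℝ → ℂ} {c : ℝ} (hc : 0 ≤ c)
    (hφ : IntegrableOn (fun ξ : ℝ => (starRingEnd ℂ) (u₀ ξ) * φ ξ) (Ioi x))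
    (hφb : ∀ ξ ∈ Ioi x, ‖φ ξ‖ ≤ c * wt u₀ ξ) :
    ‖∫ ξ in Ioi x, (starRingEnd ℂ) (u₀ ξ) * φ ξ‖ ≤ c * ((wt u₀ x - 1) / 2) := by
  rw [wt]
  refine est u₀ hc hφ fun ξ hξ => ?_
  rw [norm_mul, RCLike.norm_conj]
  have hb := hφb ξ hξ
  calc ‖u₀ ξ‖ * ‖φ ξ‖ ≤ ‖u₀ ξ‖ * (c * wt u₀ ξ) :=
        mul_le_mul_of_nonneg_left hb (norm_nonneg _)
    _ = c * (‖u₀ ξ‖ * Real.exp (2 * F u₀ ξ)) := by rw [wt]; ring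


noncomputable def Ebd : ℝ := Real.exp (2 * ∫ ξ : ℝ, ‖u₀ ξ‖)

lemma one_le_Ebd : 1 ≤ Ebd u₀ := (one_le_wt u₀ 0).trans (wt_le u₀ 0)

section Op

variable {ζ : ℂ} (hζ : 0 ≤ ζ.im)

/-- weighted multiplication -/
noncomputable def mw (q : ℝ → ℂ) : ℝ → ℂ := fun ξ => ((wt u₀ ξ : ℝ) : ℂ) * q ξ

lemma mw_cont (q : BoundedContinuousFunction ℝ ℂ) : Continuous (mw u₀ q) :=
  (Complex.continuous_ofReal.comp (wt_continuous u₀)).mul q.continuous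

lemma mw_norm (q : ℝ → ℂ) (ξ : ℝ) : ‖mw u₀ q ξ‖ = wt u₀ ξ * ‖q ξ‖ := by
  rw [mw, norm_mul, Complex.norm_real, Real.norm_eq_abs, abs_of_pos (wt_pos u₀ ξ)]

lemma mw_bound (q : BoundedContinuousFunction ℝ ℂ) (ξ : ℝ) :
    ‖mw u₀ q ξ‖ ≤ Ebd u₀ * ‖q‖ := by
  rw [mw_norm]
  exact mul_le_mul (wt_le u₀ ξ) (q.norm_coe_le_norm ξ) (norm_nonneg _)
    ((Real.exp_pos _).le)

noncomputable def T1 (ζ : ℂ) (q : ℝ → ℂ) : ℝ → ℂ :=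
  fun x => -∫ ξ in Ioi x, Ker ζ x ξ * u₀ ξ * mw u₀ q ξ

noncomputable def T2 (q : ℝ → ℂ) : ℝ → ℂ :=
  fun x => 1 + ∫ ξ in Ioi x, (starRingEnd ℂ) (u₀ ξ) * mw u₀ q ξ

lemma T2_int (q : BoundedContinuousFunction ℝ ℂ) (a : ℝ) :
    IntegrableOn (fun ξ : ℝ => (starRingEnd ℂ) (u₀ ξ) * mw u₀ q ξ) (Ioi a) :=
  int2 u₀ (mw_cont u₀ q) (mw_bound u₀ q) a

lemma T2_cont' (q : BoundedContinuousFunction ℝ ℂ) : Continuous (T2 u₀ q) :=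
  continuous_const.add
    (continuous_integral_Ioi (int2 u₀ (mw_cont u₀ q) (mw_bound u₀ q)))

lemma mw_bound'' (q : BoundedContinuousFunction ℝ ℂ) (ξ : ℝ) :
    ‖mw u₀ q ξ‖ ≤ ‖q‖ * wt u₀ ξ := by
  rw [mw_norm, mul_comm]
  exact mul_le_mul_of_nonneg_right (q.norm_coe_le_norm ξ) (wt_pos u₀ ξ).le

lemma T2_bound' (q : BoundedContinuousFunction ℝ ℂ) (x : ℝ) :
    ‖T2 u₀ q x‖ ≤ 1 + ‖q‖ * ((wt u₀ x - 1) / 2) := by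
  rw [T2]
  refine (norm_add_le _ _).trans ?_
  rw [norm_one]
  gcongr
  exact est_T2 u₀ (norm_nonneg q) (T2_int u₀ q x) fun ξ _ => mw_bound'' u₀ q ξ

lemma wt_inv_est (x : ℝ) {c z : ℝ} (hc : 0 ≤ c) (hz : z ≤ c * ((wt u₀ x - 1) / 2)) :
    (wt u₀ x)⁻¹ * z ≤ c / 2 := by
  have hw := wt_pos u₀ x
  have hw1 := one_le_wt u₀ x
  have h1 : (wt u₀ x)⁻¹ * z ≤ (wt u₀ x)⁻¹ * (c * ((wt u₀ x - 1) / 2)) := by gcongr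
  refine h1.trans ?_
  rw [inv_mul_le_iff₀ hw]
  nlinarith

include hζ

lemma T1_int (q : BoundedContinuousFunction ℝ ℂ) (x : ℝ) :
    IntegrableOn (fun ξ : ℝ => Ker ζ x ξ * u₀ ξ * mw u₀ q ξ) (Ioi x) :=
  int1 u₀ hζ (mw_cont u₀ q) (mw_bound u₀ q) x

lemma T1_cont (q : BoundedContinuousFunction ℝ ℂ) : Continuous (T1 u₀ ζ q) := by
  have hrw : ∀ x : ℝ, T1 u₀ ζ q x =
      -(Complex.exp (-(2 * Complex.I * ζ) * x) *
        ∫ ξ in Ioi x, Complex.exp ((2 * Complex.I * ζ) * ξ) * u₀ ξ * mw u₀ q ξ) := by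
    intro x
    rw [T1, ← integral_const_mul]
    congr 2
    funext ξ
    rw [Ker_eq]
    ring
  have hcont : Continuous (fun x : ℝ =>
      -(Complex.exp (-(2 * Complex.I * ζ) * x) *
        ∫ ξ in Ioi x, Complex.exp ((2 * Complex.I * ζ) * ξ) * u₀ ξ * mw u₀ q ξ)) := by
    refine ((Complex.continuous_exp.comp (by continuity)).mul ?_).neg
    exact continuous_integral_Ioi (int1' u₀ hζ (mw_cont u₀ q) (mw_bound u₀ q))
  exact hcont.congr fun x => (hrw x).symm

lemma T1_bound (q : BoundedContinuousFunction ℝ ℂ) (x : ℝ) :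
    ‖T1 u₀ ζ q x‖ ≤ ‖q‖ * ((wt u₀ x - 1) / 2) := by
  rw [T1, norm_neg]
  exact est_T1 u₀ hζ (norm_nonneg q) (T1_int u₀ hζ q x) fun ξ _ => mw_bound'' u₀ q ξ


lemma T1_sub (p q : BoundedContinuousFunction ℝ ℂ) (x : ℝ) :
    T1 u₀ ζ p x - T1 u₀ ζ q x =
      -∫ ξ in Ioi x, Ker ζ x ξ * u₀ ξ * (mw u₀ p ξ - mw u₀ q ξ) := by
  have h : (fun ξ : ℝ => Ker ζ x ξ * u₀ ξ * (mw u₀ p ξ - mw u₀ q ξ)) =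
      fun ξ : ℝ => Ker ζ x ξ * u₀ ξ * mw u₀ p ξ - Ker ζ x ξ * u₀ ξ * mw u₀ q ξ := by
    funext ξ; ring
  rw [h, integral_sub (T1_int u₀ hζ p x) (T1_int u₀ hζ q x), T1, T1]
  ring

lemma T1_sub_int (p q : BoundedContinuousFunction ℝ ℂ) (x : ℝ) :
    IntegrableOn (fun ξ : ℝ => Ker ζ x ξ * u₀ ξ * (mw u₀ p ξ - mw u₀ q ξ)) (Ioi x) := by
  have h : (fun ξ : ℝ => Ker ζ x ξ * u₀ ξ * (mw u₀ p ξ - mw u₀ q ξ)) =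
      fun ξ : ℝ => Ker ζ x ξ * u₀ ξ * mw u₀ p ξ - Ker ζ x ξ * u₀ ξ * mw u₀ q ξ := by
    funext ξ; ring
  rw [h]
  exact (T1_int u₀ hζ p x).sub (T1_int u₀ hζ q x)

omit hζ in
lemma T2_sub (p q : BoundedContinuousFunction ℝ ℂ) (x : ℝ) :
    T2 u₀ p x - T2 u₀ q x =
      ∫ ξ in Ioi x, (starRingEnd ℂ) (u₀ ξ) * (mw u₀ p ξ - mw u₀ q ξ) := by
  have h : (fun ξ : ℝ => (starRingEnd ℂ) (u₀ ξ) * (mw u₀ p ξ - mw u₀ q ξ)) =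
      fun ξ : ℝ => (starRingEnd ℂ) (u₀ ξ) * mw u₀ p ξ -
        (starRingEnd ℂ) (u₀ ξ) * mw u₀ q ξ := by
    funext ξ; ring
  rw [h, integral_sub (T2_int u₀ p x) (T2_int u₀ q x), T2, T2]
  ring

omit hζ in
lemma T2_sub_int (p q : BoundedContinuousFunction ℝ ℂ) (x : ℝ) :
    IntegrableOn
      (fun ξ : ℝ => (starRingEnd ℂ) (u₀ ξ) * (mw u₀ p ξ - mw u₀ q ξ)) (Ioi x) := by
  have h : (fun ξ : ℝ => (starRingEnd ℂ) (u₀ ξ) * (mw u₀ p ξ - mw u₀ q ξ)) =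
      fun ξ : ℝ => (starRingEnd ℂ) (u₀ ξ) * mw u₀ p ξ -
        (starRingEnd ℂ) (u₀ ξ) * mw u₀ q ξ := by
    funext ξ; ring
  rw [h]
  exact (T2_int u₀ p x).sub (T2_int u₀ q x)

omit hζ in
lemma mw_sub_bound (p q : BoundedContinuousFunction ℝ ℂ) (ξ : ℝ) :
    ‖mw u₀ p ξ - mw u₀ q ξ‖ ≤ dist p q * wt u₀ ξ := by
  rw [mw, mw, ← mul_sub, norm_mul, Complex.norm_real, Real.norm_eq_abs,
    abs_of_pos (wt_pos u₀ ξ), mul_comm]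
  refine mul_le_mul_of_nonneg_right ?_ (wt_pos u₀ ξ).le
  rw [← dist_eq_norm]
  exact BoundedContinuousFunction.dist_coe_le_dist ξ

lemma T1_decay (q : BoundedContinuousFunction ℝ ℂ) (x : ℝ) :
    ‖T1 u₀ ζ q x‖ ≤ Ebd u₀ * ‖q‖ * F u₀ x := by
  rw [T1, norm_neg]
  refine est0 u₀ (mul_nonneg (by linarith [one_le_Ebd u₀]) (norm_nonneg q)) (T1_int u₀ hζ q x) fun ξ hξ => ?_
  rw [norm_mul, norm_mul]
  have hk := Ker_norm_le hζ (le_of_lt hξ)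
  have hb := mw_bound u₀ q ξ
  calc ‖Ker ζ x ξ‖ * ‖u₀ ξ‖ * ‖mw u₀ q ξ‖ ≤ 1 * ‖u₀ ξ‖ * (Ebd u₀ * ‖q‖) :=
        mul_le_mul (mul_le_mul hk le_rfl (norm_nonneg _) zero_le_one) hb
          (norm_nonneg _) (by positivity)
    _ = Ebd u₀ * ‖q‖ * ‖u₀ ξ‖ := by ring

omit hζ in
lemma T2_decay (q : BoundedContinuousFunction ℝ ℂ) (x : ℝ) :
    ‖T2 u₀ q x - 1‖ ≤ Ebd u₀ * ‖q‖ * F u₀ x := by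
  have h : T2 u₀ q x - 1 = ∫ ξ in Ioi x, (starRingEnd ℂ) (u₀ ξ) * mw u₀ q ξ := by
    rw [T2]; ring
  rw [h]
  refine est0 u₀ (mul_nonneg (by linarith [one_le_Ebd u₀]) (norm_nonneg q)) (T2_int u₀ q x) fun ξ hξ => ?_
  rw [norm_mul, RCLike.norm_conj]
  have hb := mw_bound u₀ q ξ
  calc ‖u₀ ξ‖ * ‖mw u₀ q ξ‖ ≤ ‖u₀ ξ‖ * (Ebd u₀ * ‖q‖) :=
        mul_le_mul_of_nonneg_left hb (norm_nonneg _)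
    _ = Ebd u₀ * ‖q‖ * ‖u₀ ξ‖ := by ring


noncomputable def S (hζ' : 0 ≤ ζ.im)
    (p : BoundedContinuousFunction ℝ ℂ × BoundedContinuousFunction ℝ ℂ) :
    BoundedContinuousFunction ℝ ℂ × BoundedContinuousFunction ℝ ℂ :=
  (BoundedContinuousFunction.ofNormedAddCommGroup
      (fun x => (wt u₀ x)⁻¹ • T1 u₀ ζ p.2 x)
      (((wt_continuous u₀).inv₀ fun x => (wt_pos u₀ x).ne').smul (T1_cont u₀ hζ' p.2))
      (‖p.2‖ / 2)
      (fun x => by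
        rw [norm_smul, Real.norm_eq_abs, abs_of_pos (inv_pos.2 (wt_pos u₀ x))]
        exact wt_inv_est u₀ x (norm_nonneg _) (T1_bound u₀ hζ' p.2 x)),
   BoundedContinuousFunction.ofNormedAddCommGroup
      (fun x => (wt u₀ x)⁻¹ • T2 u₀ p.1 x)
      (((wt_continuous u₀).inv₀ fun x => (wt_pos u₀ x).ne').smul (T2_cont' u₀ p.1))
      (1 + ‖p.1‖ / 2)
      (fun x => by
        rw [norm_smul, Real.norm_eq_abs, abs_of_pos (inv_pos.2 (wt_pos u₀ x))]
        have h3 := wt_inv_est u₀ x (norm_nonneg p.1)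
          (le_refl (‖p.1‖ * ((wt u₀ x - 1) / 2)))
        have h4 : (wt u₀ x)⁻¹ ≤ 1 := by
          have h5 := one_le_wt u₀ x
          have h6 := wt_pos u₀ x
          rw [inv_le_one_iff₀]
          right; exact h5
        calc (wt u₀ x)⁻¹ * ‖T2 u₀ p.1 x‖
            ≤ (wt u₀ x)⁻¹ * (1 + ‖p.1‖ * ((wt u₀ x - 1) / 2)) := by
              have := inv_pos.2 (wt_pos u₀ x)
              exact mul_le_mul_of_nonneg_left (T2_bound' u₀ p.1 x) this.le
          _ = (wt u₀ x)⁻¹ + (wt u₀ x)⁻¹ * (‖p.1‖ * ((wt u₀ x - 1) / 2)) := by ring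
          _ ≤ 1 + ‖p.1‖ / 2 := add_le_add h4 h3))

lemma S_contracting : ContractingWith 2⁻¹ (S u₀ hζ) := by
  constructor
  · rw [← NNReal.coe_lt_coe]
    norm_num
  · refine LipschitzWith.of_dist_le_mul fun p q => ?_
    have hc : ((2⁻¹ : ℝ≥0) : ℝ) = 1 / 2 := by norm_num
    rw [hc, Prod.dist_eq]
    refine max_le ?_ ?_
    · refine (BoundedContinuousFunction.dist_le (by positivity)).2 fun x => ?_
      rw [dist_eq_norm]
      show ‖(wt u₀ x)⁻¹ • T1 u₀ ζ p.2 x - (wt u₀ x)⁻¹ • T1 u₀ ζ q.2 x‖ ≤ _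
      rw [← smul_sub, norm_smul, Real.norm_eq_abs,
        abs_of_pos (inv_pos.2 (wt_pos u₀ x)), T1_sub u₀ hζ p.2 q.2 x, norm_neg]
      have hest := est_T1 u₀ hζ (dist_nonneg : (0:ℝ) ≤ dist p.2 q.2)
        (T1_sub_int u₀ hζ p.2 q.2 x) (fun ξ _ => mw_sub_bound u₀ p.2 q.2 ξ)
      have h2 := wt_inv_est u₀ x dist_nonneg hest
      have hle : dist p.2 q.2 ≤ dist p q := by
        rw [Prod.dist_eq]; exact le_max_right _ _
      refine h2.trans ?_
      linarith
    · refine (BoundedContinuousFunction.dist_le (by positivity)).2 fun x => ?_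
      rw [dist_eq_norm]
      show ‖(wt u₀ x)⁻¹ • T2 u₀ p.1 x - (wt u₀ x)⁻¹ • T2 u₀ q.1 x‖ ≤ _
      rw [← smul_sub, norm_smul, Real.norm_eq_abs,
        abs_of_pos (inv_pos.2 (wt_pos u₀ x)), T2_sub u₀ p.1 q.1 x]
      have hest := est_T2 u₀ (dist_nonneg : (0:ℝ) ≤ dist p.1 q.1)
        (T2_sub_int u₀ p.1 q.1 x) (fun ξ _ => mw_sub_bound u₀ p.1 q.1 ξ)
      have h2 := wt_inv_est u₀ x dist_nonneg hest
      have hle : dist p.1 q.1 ≤ dist p q := by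
        rw [Prod.dist_eq]; exact le_max_left _ _
      refine h2.trans ?_
      linarith

end Op

end Stmt15

namespace Stmt15

open MeasureTheory Set Filter Topology

lemma unique (u₀ : SchwartzMap ℝ ℂ) {ζ : ℂ} (hζ : 0 ≤ ζ.im)
    (w v : (ℝ → ℂ) × (ℝ → ℂ)) (hw : IsVolterraSol u₀ ζ w) (hv : IsVolterraSol u₀ ζ v) :
    ∀ x ≥ (0 : ℝ), w.1 x = v.1 x ∧ w.2 x = v.2 x := by
  obtain ⟨-, -, ⟨Cw, hCw⟩, hweq⟩ := hw
  obtain ⟨-, -, ⟨Cv, hCv⟩, hveq⟩ := hv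
  set g : ℝ → ℝ := fun x => max ‖w.1 x - v.1 x‖ ‖w.2 x - v.2 x‖ * (wt u₀ x)⁻¹ with hg
  have hwinv_le_one : ∀ x : ℝ, (wt u₀ x)⁻¹ ≤ 1 := by
    intro x
    rw [inv_le_one_iff₀]
    right; exact one_le_wt u₀ x
  have hgnn : ∀ x, 0 ≤ g x := by
    intro x
    refine mul_nonneg (le_trans (norm_nonneg _) (le_max_left _ _))
      (inv_pos.2 (wt_pos u₀ x)).le
  have hgle : ∀ x, 0 ≤ x → g x ≤ Cw + Cv := by
    intro x hx
    have h1 : ‖w.1 x - v.1 x‖ ≤ Cw + Cv :=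
      (norm_sub_le _ _).trans (add_le_add (hCw x hx).1 (hCv x hx).1)
    have h2 : ‖w.2 x - v.2 x‖ ≤ Cw + Cv :=
      (norm_sub_le _ _).trans (add_le_add (hCw x hx).2 (hCv x hx).2)
    have h4 : max ‖w.1 x - v.1 x‖ ‖w.2 x - v.2 x‖ ≤ Cw + Cv := max_le h1 h2
    have h5 := hwinv_le_one x
    have h6 : (0:ℝ) ≤ max ‖w.1 x - v.1 x‖ ‖w.2 x - v.2 x‖ :=
      le_trans (norm_nonneg _) (le_max_left _ _)
    calc g x ≤ (Cw + Cv) * 1 := mul_le_mul h4 h5 (inv_pos.2 (wt_pos u₀ x)).le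
          (le_trans h6 h4)
      _ = Cw + Cv := mul_one _
  set M : ℝ := ⨆ x : Ici (0:ℝ), g ↑x with hMdef
  have hbdd : BddAbove (Set.range fun x : Ici (0:ℝ) => g ↑x) := by
    refine ⟨Cw + Cv, ?_⟩
    rintro y ⟨⟨x, hx⟩, rfl⟩
    exact hgle x hx
  have hle : ∀ x, 0 ≤ x → g x ≤ M := fun x hx => le_ciSup hbdd ⟨x, hx⟩
  have hM0 : 0 ≤ M := le_trans (hgnn 0) (hle 0 le_rfl)
  have hb : ∀ ξ, 0 ≤ ξ → ‖w.1 ξ - v.1 ξ‖ ≤ M * wt u₀ ξ ∧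
      ‖w.2 ξ - v.2 ξ‖ ≤ M * wt u₀ ξ := by
    intro ξ hξ
    have h := hle ξ hξ
    have hwp := wt_pos u₀ ξ
    constructor
    · have h1 : ‖w.1 ξ - v.1 ξ‖ * (wt u₀ ξ)⁻¹ ≤ M :=
        le_trans (mul_le_mul_of_nonneg_right (le_max_left _ _) (inv_pos.2 hwp).le) h
      exact (mul_inv_le_iff₀ hwp).1 h1
    · have h1 : ‖w.2 ξ - v.2 ξ‖ * (wt u₀ ξ)⁻¹ ≤ M :=
        le_trans (mul_le_mul_of_nonneg_right (le_max_right _ _) (inv_pos.2 hwp).le) h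
      exact (mul_inv_le_iff₀ hwp).1 h1
  have hstep : ∀ x, 0 ≤ x → g x ≤ M / 2 := by
    intro x hx
    obtain ⟨hwi1, hwi2, hwe1, hwe2⟩ := hweq x hx
    obtain ⟨hvi1, hvi2, hve1, hve2⟩ := hveq x hx
    have hwi1' : IntegrableOn (fun ξ : ℝ => Ker ζ x ξ * u₀ ξ * w.2 ξ) (Ioi x) := hwi1
    have hvi1' : IntegrableOn (fun ξ : ℝ => Ker ζ x ξ * u₀ ξ * v.2 ξ) (Ioi x) := hvi1
    have hint1 : IntegrableOn (fun ξ : ℝ => Ker ζ x ξ * u₀ ξ * (w.2 ξ - v.2 ξ)) (Ioi x) := by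
      refine (hwi1'.sub hvi1').congr (ae_of_all _ fun ξ => ?_)
      simp only [Pi.sub_apply]
      ring
    have hint2 : IntegrableOn (fun ξ : ℝ => (starRingEnd ℂ) (u₀ ξ) * (w.1 ξ - v.1 ξ))
        (Ioi x) := by
      refine (hwi2.sub hvi2).congr (ae_of_all _ fun ξ => ?_)
      simp only [Pi.sub_apply]
      ring
    have hwe1' : w.1 x = -∫ ξ in Ioi x, Ker ζ x ξ * u₀ ξ * w.2 ξ := hwe1
    have hve1' : v.1 x = -∫ ξ in Ioi x, Ker ζ x ξ * u₀ ξ * v.2 ξ := hve1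
    have hsub1 : w.1 x - v.1 x = -∫ ξ in Ioi x, Ker ζ x ξ * u₀ ξ * (w.2 ξ - v.2 ξ) := by
      rw [hwe1', hve1']
      have h : (fun ξ : ℝ => Ker ζ x ξ * u₀ ξ * (w.2 ξ - v.2 ξ)) =
          fun ξ : ℝ => Ker ζ x ξ * u₀ ξ * w.2 ξ - Ker ζ x ξ * u₀ ξ * v.2 ξ := by
        funext ξ; ring
      rw [h, integral_sub hwi1' hvi1']
      ring
    have hsub2 : w.2 x - v.2 x =
        ∫ ξ in Ioi x, (starRingEnd ℂ) (u₀ ξ) * (w.1 ξ - v.1 ξ) := by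
      rw [hwe2, hve2]
      have h : (fun ξ : ℝ => (starRingEnd ℂ) (u₀ ξ) * (w.1 ξ - v.1 ξ)) =
          fun ξ : ℝ => (starRingEnd ℂ) (u₀ ξ) * w.1 ξ -
            (starRingEnd ℂ) (u₀ ξ) * v.1 ξ := by
        funext ξ; ring
      rw [h, integral_sub hwi2 hvi2]
      ring
    have h1 : ‖w.1 x - v.1 x‖ ≤ M * ((wt u₀ x - 1) / 2) := by
      rw [hsub1, norm_neg]
      exact est_T1 u₀ hζ hM0 hint1 fun ξ hξ => (hb ξ (le_trans hx (le_of_lt hξ))).2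
    have h2 : ‖w.2 x - v.2 x‖ ≤ M * ((wt u₀ x - 1) / 2) := by
      rw [hsub2]
      exact est_T2 u₀ hM0 hint2 fun ξ hξ => (hb ξ (le_trans hx (le_of_lt hξ))).1
    have hmax : max ‖w.1 x - v.1 x‖ ‖w.2 x - v.2 x‖ ≤ M * ((wt u₀ x - 1) / 2) :=
      max_le h1 h2
    have := wt_inv_est u₀ x hM0 hmax
    rw [hg]
    calc max ‖w.1 x - v.1 x‖ ‖w.2 x - v.2 x‖ * (wt u₀ x)⁻¹
        = (wt u₀ x)⁻¹ * max ‖w.1 x - v.1 x‖ ‖w.2 x - v.2 x‖ := by ring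
      _ ≤ M / 2 := this
  have hM2 : M ≤ M / 2 := ciSup_le fun x => hstep x.1 x.2
  have hMz : M = 0 := le_antisymm (by linarith) hM0
  intro x hx
  have h := hstep x hx
  rw [hMz] at h
  have hg0 : g x = 0 := le_antisymm (by simpa using h) (hgnn x)
  have hwp := wt_pos u₀ x
  have hmax0 : max ‖w.1 x - v.1 x‖ ‖w.2 x - v.2 x‖ = 0 := by
    rcases mul_eq_zero.1 hg0 with h' | h'
    · exact h'
    · exact absurd h' (inv_pos.2 hwp).ne'
  constructor
  · have : ‖w.1 x - v.1 x‖ ≤ 0 := hmax0 ▸ le_max_left _ _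
    have := le_antisymm this (norm_nonneg _)
    rwa [norm_eq_zero, sub_eq_zero] at this
  · have : ‖w.2 x - v.2 x‖ ≤ 0 := hmax0 ▸ le_max_right _ _
    have := le_antisymm this (norm_nonneg _)
    rwa [norm_eq_zero, sub_eq_zero] at this

end Stmt15

section
open MeasureTheory Set Filter Topology Stmt15

/-- for a Schwartz initial datum `u₀` and `Im ζ ≥ 0`, the Volterra system has
a unique bounded continuous solution on `[0,∞)`, and this solution satisfies `v₁(x) → 0`
and `v₂(x) → 1` as `x → ∞`. -/
theorem stmt_15 (u₀ : SchwartzMap ℝ ℂ) (ζ : ℂ) (hζ : 0 ≤ ζ.im) :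
    ∃ v : (ℝ → ℂ) × (ℝ → ℂ),
      IsVolterraSol u₀ ζ v ∧
      (∀ w : (ℝ → ℂ) × (ℝ → ℂ), IsVolterraSol u₀ ζ w →
        ∀ x ≥ (0 : ℝ), w.1 x = v.1 x ∧ w.2 x = v.2 x) ∧
      Filter.Tendsto v.1 Filter.atTop (nhds 0) ∧
      Filter.Tendsto v.2 Filter.atTop (nhds 1) := by
  obtain ⟨p, hp⟩ : ∃ p, Function.IsFixedPt (S u₀ hζ) p :=
    ⟨_, (S_contracting u₀ hζ).fixedPoint_isFixedPt⟩
  set v : (ℝ → ℂ) × (ℝ → ℂ) :=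
    (fun x => ((wt u₀ x : ℝ) : ℂ) * p.1 x, fun x => ((wt u₀ x : ℝ) : ℂ) * p.2 x) with hvdef
  have hp1 : ∀ x : ℝ, (wt u₀ x)⁻¹ • T1 u₀ ζ p.2 x = p.1 x := fun x =>
    DFunLike.congr_fun (congrArg Prod.fst hp) x
  have hp2 : ∀ x : ℝ, (wt u₀ x)⁻¹ • T2 u₀ p.1 x = p.2 x := fun x =>
    DFunLike.congr_fun (congrArg Prod.snd hp) x
  have hcancel : ∀ (x : ℝ) (z : ℂ), ((wt u₀ x : ℝ) : ℂ) * ((wt u₀ x)⁻¹ • z) = z := by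
    intro x z
    rw [Complex.real_smul, ← mul_assoc, ← Complex.ofReal_mul,
      mul_inv_cancel₀ (wt_pos u₀ x).ne', Complex.ofReal_one, one_mul]
  have hv1 : ∀ x, v.1 x = T1 u₀ ζ p.2 x := by
    intro x
    show ((wt u₀ x : ℝ) : ℂ) * p.1 x = _
    rw [← hp1 x, hcancel]
  have hv2 : ∀ x, v.2 x = T2 u₀ p.1 x := by
    intro x
    show ((wt u₀ x : ℝ) : ℂ) * p.2 x = _
    rw [← hp2 x, hcancel]
  have hE1 : (1:ℝ) ≤ Ebd u₀ := one_le_Ebd u₀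
  have hsol : IsVolterraSol u₀ ζ v := by
    refine ⟨?_, ?_, ?_, ?_⟩
    · exact ((Complex.continuous_ofReal.comp (wt_continuous u₀)).mul
        p.1.continuous).continuousOn
    · exact ((Complex.continuous_ofReal.comp (wt_continuous u₀)).mul
        p.2.continuous).continuousOn
    · refine ⟨Ebd u₀ * ‖p.1‖ + Ebd u₀ * ‖p.2‖, fun x _ => ⟨?_, ?_⟩⟩
      · have h := mw_bound u₀ p.1 x
        have h2 : (0:ℝ) ≤ Ebd u₀ * ‖p.2‖ :=
          mul_nonneg (by linarith) (norm_nonneg _)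
        exact le_trans h (by linarith)
      · have h := mw_bound u₀ p.2 x
        have h2 : (0:ℝ) ≤ Ebd u₀ * ‖p.1‖ :=
          mul_nonneg (by linarith) (norm_nonneg _)
        exact le_trans h (by linarith)
    · intro x hx
      exact ⟨T1_int u₀ hζ p.2 x, T2_int u₀ p.1 x, hv1 x, hv2 x⟩
  refine ⟨v, hsol, fun w hw => unique u₀ hζ w v hw hsol, ?_, ?_⟩
  · refine squeeze_zero_norm (fun x => ?_)
      (by simpa using (F_tendsto u₀).const_mul (Ebd u₀ * ‖p.2‖))
    rw [hv1 x]
    exact T1_decay u₀ hζ p.2 x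
  · rw [← tendsto_sub_nhds_zero_iff]
    refine squeeze_zero_norm (fun x => ?_)
      (by simpa using (F_tendsto u₀).const_mul (Ebd u₀ * ‖p.1‖))
    rw [hv2 x]
    exact T2_decay u₀ p.1 x

end
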